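/- Every ℝ-linear derivation of the ring C(ℝ) of all real-valued continuous functions on ℝ (with pointwise multiplication) is zero: if D : C(ℝ,ℝ) → C(ℝ,ℝ) is ℝ-linear and satisfies D(fg) = D(f)·g + f·D(g) for all continuous f,g : ℝ → ℝ, then D = 0. -/

import Mathlib

/-- Every ℝ-linear derivation of the ring `C(ℝ,ℝ)` of all real-valued continuous
functions on ℝ (with pointwise multiplication) is zero. -/
theorem derivation_of_continuous_functions_is_zero
    (D : C(ℝ, ℝ) → C(ℝ, ℝ)) (hlin : IsLinearMap ℝ D)
    (hleib : ∀ f g : C(ℝ, ℝ), D (f * g) = D f * g + f * D g) :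
    D = 0 := by
  have hone : D 1 = 0 := by
    have h := hleib 1 1
    simp only [mul_one, one_mul] at h
    exact left_eq_add.mp h
  -- key: if f vanishes at x₀ then D f vanishes at x₀
  have key : ∀ (f : C(ℝ, ℝ)) (x₀ : ℝ), f x₀ = 0 → D f x₀ = 0 := by
    intro f x₀ hf
    set p : C(ℝ, ℝ) := ⟨fun x => Real.sqrt (max (f x) 0), by
      exact Real.continuous_sqrt.comp (f.continuous.max continuous_const)⟩ with hp
    set q : C(ℝ, ℝ) := ⟨fun x => Real.sqrt (max (-f x) 0), by
      exact Real.continuous_sqrt.comp ((f.continuous.neg).max continuous_const)⟩ with hq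
    have hfpq : f = p * p - q * q := by
      ext x
      simp only [ContinuousMap.sub_apply, ContinuousMap.mul_apply, hp, hq,
        ContinuousMap.coe_mk]
      rw [Real.mul_self_sqrt (le_max_right _ _), Real.mul_self_sqrt (le_max_right _ _)]
      rcases le_total (f x) 0 with h | h
      · rw [max_eq_right h, max_eq_left (neg_nonneg.2 h)]; ring
      · rw [max_eq_left h, max_eq_right (neg_nonpos.2 h)]; ring
    have hpx : p x₀ = 0 := by simp [hp, hf]
    have hqx : q x₀ = 0 := by simp [hq, hf]
    have : D f = D (p * p) - D (q * q) := by
      rw [hfpq, hlin.map_sub]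
    rw [this, hleib p p, hleib q q]
    simp [hpx, hqx]
  funext f
  ext x₀
  have hsplit : D f = D (f - (f x₀) • 1) + (f x₀) • D 1 := by
    rw [← hlin.map_smul, ← hlin.map_add]
    congr 1
    ring
  rw [hsplit]
  have h0 : (f - (f x₀) • 1) x₀ = 0 := by simp
  have := key _ _ h0
  simp [hone, this]
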